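/- With H_m a parity check matrix of the q-ary Hamming code of length n = (q^m−1)/(q−1), and C_{(m,r)} = {x ∈ F_{q^r}^n : H_m x = 0}, for every vector v ∈ F_{q^r}^n the distance d(v, C_{(m,r)}) from v to the code equals rank(S_v), the F_q-rank of the r×m syndrome matrix of v. -/

import Mathlib

open Submodule Set Module

lemma ham_cols_surj {q m n : ℕ} (F : Type) [Field F] [Fintype F] [DecidableEq F]
    (hq : Fintype.card F = q)
    (H : Matrix (Fin m) (Fin n) F)
    (hcols : ∀ j, (fun i => H i j) ≠ 0)
    (hind : ∀ j₁ j₂, j₁ ≠ j₂ → ∀ c : F, (fun i => H i j₂) ≠ c • (fun i => H i j₁))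
    (hn : n * (q - 1) = q ^ m - 1) (u : Fin m → F) (hu : u ≠ 0) :
    ∃ (j : Fin n) (c : F), c ≠ 0 ∧ u = c • (fun i => H i j) := by
  classical
  set f : Fin n × {c : F // c ≠ 0} → {u : Fin m → F // u ≠ 0} :=
    fun p => ⟨p.2.1 • (fun i => H i p.1), by
      intro h0
      exact hcols p.1 (by
        funext i
        have := congrFun h0 i
        simp only [Pi.smul_apply, smul_eq_mul, Pi.zero_apply] at this ⊢
        rcases mul_eq_zero.mp this with h | h
        · exact absurd h p.2.2
        · exact h)⟩ with hf
  have hinj : Function.Injective f := by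
    rintro ⟨j₁, c₁, hc₁⟩ ⟨j₂, c₂, hc₂⟩ h
    simp only [hf, Subtype.mk_eq_mk] at h
    by_cases hj : j₁ = j₂
    · subst hj
      have : c₁ = c₂ := by
        obtain ⟨i, hi⟩ : ∃ i, H i j₁ ≠ 0 := by
          by_contra hc; push_neg at hc
          exact hcols j₁ (funext fun i => hc i)
        have := congrFun h i
        simp only [Pi.smul_apply, smul_eq_mul] at this
        exact mul_right_cancel₀ hi this
      simp [this]
    · exfalso
      refine hind j₁ j₂ hj (c₂⁻¹ * c₁) ?_
      funext i
      have := congrFun h i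
      simp only [Pi.smul_apply, smul_eq_mul] at this ⊢
      field_simp
      linear_combination -this
  have hcard : Fintype.card (Fin n × {c : F // c ≠ 0}) =
      Fintype.card {u : Fin m → F // u ≠ 0} := by
    have h1 : Fintype.card {c : F // c ≠ 0} = q - 1 := by
      rw [Fintype.card_subtype_compl, Fintype.card_subtype_eq, hq]
    have h2 : Fintype.card {u : Fin m → F // u ≠ 0} = q ^ m - 1 := by
      rw [Fintype.card_subtype_compl, Fintype.card_subtype_eq,
        Fintype.card_fun, hq, Fintype.card_fin]
    simp [h1, h2, hn]
  have hsurj := ((Fintype.bijective_iff_injective_and_card f).mpr ⟨hinj, hcard⟩).2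
  obtain ⟨⟨j, c, hc⟩, hjc⟩ := hsurj ⟨u, hu⟩
  exact ⟨j, c, hc, by simpa [hf] using hjc.symm⟩

set_option maxHeartbeats 1600000 in
/-- For the lifted Hamming code `C_{(m,r)}` and any `v ∈ F_{q^r}^n`,
the distance from `v` to the code equals the `F_q`-rank of the syndrome matrix `S_v`. -/
theorem dist_to_lifted_hamming_eq_syndrome_rank {q m r n : ℕ} (hm : 1 ≤ m) (hr : 1 ≤ r)
    (F K : Type) [Field F] [Fintype F] [DecidableEq F]
    [Field K] [Fintype K] [DecidableEq K] [Algebra F K]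
    (hq : Fintype.card F = q)
    (b : Basis (Fin r) F K)
    (H : Matrix (Fin m) (Fin n) F)
    (hcols : ∀ j, (fun i => H i j) ≠ 0)
    (hind : ∀ j₁ j₂, j₁ ≠ j₂ → ∀ c : F, (fun i => H i j₂) ≠ c • (fun i => H i j₁))
    (hn : n * (q - 1) = q ^ m - 1)
    (v : Fin n → K) :
    sInf {d : ℕ | ∃ c : Fin n → K,
        (H.map (algebraMap F K)).mulVec c = 0 ∧ hammingDist v c = d} =
      (Matrix.of fun (i : Fin r) (j : Fin m) =>
        b.repr ((H.map (algebraMap F K)).mulVec v j) i).rank := by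
  classical
  haveI : Module.Finite F K := Module.Finite.of_basis b
  set HK := H.map (algebraMap F K) with hHK
  set s : Fin m → K := HK.mulVec v with hs
  set W : Submodule F K := Submodule.span F (Set.range s) with hW
  -- Step A: the rank equals the dimension of the span of the syndrome coordinates
  have hA : (Matrix.of fun (i : Fin r) (j : Fin m) => b.repr (s j) i).rank
      = finrank F W := by
    rw [Matrix.rank_eq_finrank_span_cols]
    have hrange : Set.range (Matrix.col (Matrix.of fun (i : Fin r) (j : Fin m) => b.repr (s j) i))
        = ⇑(b.equivFun.toLinearMap) '' Set.range s := by
      rw [← Set.range_comp]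
      rfl
    rw [hrange, Submodule.span_image]
    exact LinearEquiv.finrank_map_eq b.equivFun W
  rw [hA]
  -- elements of W
  set σ : Fin m → W := fun i => ⟨s i, Submodule.subset_span ⟨i, rfl⟩⟩ with hσ
  have hkill : ∀ φ : W →ₗ[F] F, (∀ i, φ (σ i) = 0) → φ = 0 := by
    intro φ hφ
    have hspan : Submodule.span F (Set.range σ) = ⊤ := by
      apply Submodule.map_injective_of_injective W.injective_subtype
      rw [Submodule.map_span, Submodule.map_top, Submodule.range_subtype]
      congr 1
      rw [← Set.range_comp]
      rfl
    ext x
    have hx : x ∈ Submodule.span F (Set.range σ) := hspan ▸ Submodule.mem_top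
    simp only [LinearMap.zero_apply]
    induction hx using Submodule.span_induction with
    | mem y hy => obtain ⟨i, rfl⟩ := hy; exact hφ i
    | zero => simp
    | add y z _ _ hy hz => simp [hy, hz]
    | smul a y _ hy => simp [hy]
  set ρ := finrank F W with hρ
  set w : Basis (Fin ρ) F W := Module.finBasis F W with hw
  set a : Fin ρ → (Fin m → F) := fun t i => w.repr (σ i) t with ha
  have hane : ∀ t, a t ≠ 0 := by
    intro t h0
    have : w.coord t = 0 := hkill _ (fun i => congrFun h0 i)
    have := congrArg (fun φ : W →ₗ[F] F => φ (w t)) this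
    simp at this
  have hprop : ∀ t₁ t₂ : Fin ρ, t₁ ≠ t₂ → ∀ d : F, a t₂ ≠ d • a t₁ := by
    intro t₁ t₂ ht d hEq
    have : (d • w.coord t₁ - w.coord t₂ : W →ₗ[F] F) = 0 := by
      apply hkill
      intro i
      have := congrFun hEq i
      simp only [Pi.smul_apply, smul_eq_mul] at this
      simp [LinearMap.sub_apply, LinearMap.smul_apply, Basis.coord_apply, ← ha]
      rw [show w.repr (σ i) t₂ = a t₂ i from rfl, show w.repr (σ i) t₁ = a t₁ i from rfl,
        this]
      ring
    have := congrArg (fun φ : W →ₗ[F] F => φ (w t₂)) this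
    simp only [LinearMap.sub_apply, LinearMap.smul_apply, Basis.coord_apply,
      Basis.repr_self, Finsupp.single_eq_same, Finsupp.single_eq_of_ne' (Ne.symm ht),
      smul_eq_mul, mul_zero, zero_sub, LinearMap.zero_apply, neg_eq_zero] at this
    exact one_ne_zero this
  -- choose columns
  choose j c hc hac using fun t => ham_cols_surj F hq H hcols hind hn (a t) (hane t)
  have hjinj : Function.Injective j := by
    intro t₁ t₂ hj
    by_contra ht
    refine hprop t₁ t₂ ht (c t₂ * (c t₁)⁻¹) ?_
    rw [hac t₂, hac t₁, hj, smul_smul]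
    congr 1
    exact (inv_mul_cancel_right₀ (hc t₁) _).symm
  set x : Fin ρ → K := fun t => algebraMap F K (c t) * (w t : K) with hx
  have hxne : ∀ t, x t ≠ 0 := by
    intro t h0
    rcases mul_eq_zero.mp h0 with h | h
    · exact hc t ((map_eq_zero_iff (algebraMap F K)
        (algebraMap F K).injective).mp h)
    · exact Basis.ne_zero w t (by exact_mod_cast Subtype.coe_injective (by simpa using h))
  set e : Fin n → K := ∑ t, Pi.single (j t) (x t) with he
  have hsrepr : ∀ i, s i = ∑ t, (w.repr (σ i) t) • (w t : K) := by
    intro i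
    have h1 : ((∑ t, w.repr (σ i) t • w t : W) : K) = s i :=
      congrArg (Subtype.val : W → K) (Basis.sum_repr w (σ i))
    rw [← h1]
    push_cast
    rfl
  have hHKe : HK.mulVec e = s := by
    funext i
    have : HK.mulVec e = ∑ t, HK.mulVec (Pi.single (j t) (x t)) := by
      rw [he, ← Matrix.mulVecLin_apply, map_sum]
      simp [Matrix.mulVecLin_apply]
    rw [this, Finset.sum_apply, hsrepr i]
    refine Finset.sum_congr rfl fun t _ => ?_
    rw [Matrix.mulVec_single]
    have hcol : H i (j t) * c t = w.repr (σ i) t := by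
      have := congrFun (hac t) i
      simp only [Pi.smul_apply, smul_eq_mul] at this
      rw [mul_comm]
      exact this.symm
    rw [hHK]
    simp only [Matrix.map_apply, hx, Pi.smul_apply, Matrix.col_apply, op_smul_eq_mul]
    rw [← mul_assoc, ← map_mul, hcol, Algebra.smul_def]
  have hesupp : ∀ jj, e jj ≠ 0 ↔ jj ∈ Set.range j := by
    intro jj
    constructor
    · intro hne
      by_contra hmem
      apply hne
      rw [he]
      simp only [Finset.sum_apply]
      refine Finset.sum_eq_zero fun t _ => ?_
      exact Pi.single_eq_of_ne (M := fun _ : Fin n => K) (fun hh => hmem ⟨t, hh.symm⟩) (x t)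
    · rintro ⟨t, rfl⟩
      have : e (j t) = x t := by
        rw [he]
        simp only [Finset.sum_apply]
        rw [Finset.sum_eq_single t]
        · simp
        · intro t' _ ht'
          exact Pi.single_eq_of_ne (M := fun _ : Fin n => K) (fun hh => ht' (hjinj hh).symm) (x t')
        · simp
      rw [this]
      exact hxne t
  have hnorm : hammingNorm e = ρ := by
    unfold hammingNorm
    have : ({i | e i ≠ 0} : Finset (Fin n)) = Finset.univ.image j := by
      ext jj
      simp only [Finset.mem_filter, Finset.mem_univ, true_and, Finset.mem_image]
      constructor
      · intro hne
        obtain ⟨t, ht⟩ := (hesupp jj).mp hne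
        exact ⟨t, ht⟩
      · rintro ⟨t, rfl⟩
        exact (hesupp (j t)).mpr ⟨t, rfl⟩
    rw [this, Finset.card_image_of_injective _ hjinj, Finset.card_univ, Fintype.card_fin]
  -- conclusion
  apply le_antisymm
  · apply Nat.sInf_le
    refine ⟨v - e, ?_, ?_⟩
    · rw [Matrix.mulVec_sub, hHKe, ← hs, sub_self]
    · rw [hammingDist_comm, hammingDist_eq_hammingNorm, neg_sub, sub_add_cancel, hnorm]
  · refine le_csInf ⟨hammingDist v 0, 0, by simp, rfl⟩ ?_
    rintro d ⟨cc, hcc, rfl⟩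
    set ee := v - cc with hee
    have hse : HK.mulVec ee = s := by
      rw [Matrix.mulVec_sub, hcc, sub_zero, ← hs]
    have hsub : W ≤ Submodule.span F ↑(({i | ee i ≠ 0} : Finset (Fin n)).image ee) := by
      rw [hW, Submodule.span_le]
      rintro _ ⟨i, rfl⟩
      rw [← hse]
      show HK.mulVec ee i ∈ _
      rw [show HK.mulVec ee i = ∑ jj, HK i jj * ee jj from rfl]
      have : ∑ jj, HK i jj * ee jj
          = ∑ jj ∈ ({i | ee i ≠ 0} : Finset (Fin n)), HK i jj * ee jj := by
        symm
        apply Finset.sum_subset (Finset.subset_univ _)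
        intro jj _ hjj
        simp only [Finset.mem_filter, Finset.mem_univ, true_and, not_not] at hjj
        simp [hjj]
      rw [this]
      apply Submodule.sum_mem
      intro jj hjj
      rw [hHK]
      simp only [Matrix.map_apply, ← Algebra.smul_def]
      exact Submodule.smul_mem _ _ (Submodule.subset_span (Finset.mem_coe.mpr
        (Finset.mem_image_of_mem ee hjj)))
    calc ρ ≤ finrank F (Submodule.span F ↑(({i | ee i ≠ 0} : Finset (Fin n)).image ee)) :=
          Submodule.finrank_mono hsub
      _ ≤ (({i | ee i ≠ 0} : Finset (Fin n)).image ee).card := by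
          have := finrank_span_finset_le_card (R := F)
            (({i | ee i ≠ 0} : Finset (Fin n)).image ee)
          rwa [Set.finrank] at this
      _ ≤ ({i | ee i ≠ 0} : Finset (Fin n)).card := Finset.card_image_le
      _ = hammingDist v cc := by
          unfold hammingDist
          congr 1
          ext i
          simp [hee, sub_ne_zero]
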